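/- arXiv:1810.03998 — 3 statements merged into one kernel-verified Lean document; each statement's English description precedes it below -/
import Mathlib

section
/- Let X be a Banach space with a non-degenerate bilinear form, C compact on X with adjoint C', M closed densely defined with adjoint M'. Assume the homogeneous problem has only the trivial solution in the sense: if v ∈ M'[ker(I+C')] satisfies Mv = 0 then v = 0. Let (uₙ), (vₙ) be sequences with vₙ ∈ M'[ker(I+C')] (a finite-dimensional space), satisfying (I+C)uₙ + Mvₙ = fₙ with (fₙ) bounded. If ‖vₙ‖/max(‖uₙ‖,1) → ∞ along a subsequence, then a contradiction arises; hence ‖vₙ‖ ≤ K(1 + ‖uₙ‖) for some constant K. -/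
open Filter Topology

/-- Step 3° of the proof of Theorem 2: under the triviality of the homogeneous
problem on `M'[ker (I + C')]`, the sequence `vₙ ∈ M'[ker (I + C')]` cannot grow
much faster than `uₙ`; one has a bound `‖vₙ‖ ≤ K (1 + ‖uₙ‖)`. -/
theorem v_growth_bound
    {X : Type*} [NormedAddCommGroup X] [NormedSpace ℂ X] [CompleteSpace X]
    (B : X →ₗ[ℂ] X →ₗ[ℂ] ℂ)
    (hB : ∀ u : X, (∀ v : X, B u v = 0) → u = 0)
    (C C' : X →L[ℂ] X) (hC : IsCompactOperator C)
    (hCadj : ∀ u v : X, B (C u) v = B u (C' v))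
    (M M' : X →ₗ.[ℂ] X)
    (hMdense : Dense (M.domain : Set X)) (hMclosed : M.IsClosed)
    (hMadj : ∀ (v : M.domain) (v' : M'.domain), B (M v) v' = B v (M' v'))
    -- the set `S = M'[ker (I + C')]`:
    (S : Set X)
    (hS : S = {x : X | ∃ v' : M'.domain, ((v' : X) + C' v' = 0) ∧ M' v' = x})
    -- `S` lies in the domain of `M`, and is finite-dimensional:
    (hSdom : S ⊆ (M.domain : Set X))
    (hSfin : FiniteDimensional ℂ (Submodule.span ℂ S))
    -- triviality of the homogeneous problem on `S`:
    (htriv : ∀ x ∈ S, ∀ hx : x ∈ M.domain, M ⟨x, hx⟩ = 0 → x = 0)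
    (u v f : ℕ → X)
    (hvS : ∀ n, v n ∈ S)
    (heq : ∀ n, u n + C (u n) + M ⟨v n, hSdom (hvS n)⟩ = f n)
    (hfbdd : ∃ c : ℝ, ∀ n, ‖f n‖ ≤ c) :
    ∃ K : ℝ, ∀ n, ‖v n‖ ≤ K * (1 + ‖u n‖) := by
  classical
  -- `S` is a submodule of `X`
  have hSsub : ∀ (x y : X), x ∈ S → y ∈ S → x + y ∈ S := by
    intro x y hx hy
    rw [hS] at hx hy ⊢
    obtain ⟨vx, hvx1, hvx2⟩ := hx
    obtain ⟨vy, hvy1, hvy2⟩ := hy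
    refine ⟨vx + vy, ?_, ?_⟩
    · push_cast
      rw [map_add, add_add_add_comm, hvx1, hvy1, add_zero]
    · rw [M'.map_add, hvx2, hvy2]
  have hSsmul : ∀ (c : ℂ) (x : X), x ∈ S → c • x ∈ S := by
    intro c x hx
    rw [hS] at hx ⊢
    obtain ⟨vx, hvx1, hvx2⟩ := hx
    refine ⟨c • vx, ?_, ?_⟩
    · push_cast
      rw [map_smul]
      rw [← smul_add, hvx1, smul_zero]
    · rw [M'.map_smul, hvx2]
  have hS0 : (0 : X) ∈ S := by
    rw [hS]
    exact ⟨0, by simp, by simp [M'.map_zero]⟩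
  let T : Submodule ℂ X :=
    { carrier := S
      add_mem' := fun ha hb => hSsub _ _ ha hb
      zero_mem' := hS0
      smul_mem' := fun c x hx => hSsmul c x hx }
  have hspan : Submodule.span ℂ S = T :=
    le_antisymm (Submodule.span_le.mpr (fun x hx => hx)) Submodule.subset_span
  haveI hTfin : FiniteDimensional ℂ T := hspan ▸ hSfin
  -- the restriction of `M` to `T` as a linear map
  let L : T →ₗ[ℂ] X :=
    { toFun := fun x => M ⟨x.1, hSdom x.2⟩
      map_add' := by
        intro a b
        show M ⟨((a + b : T) : X), hSdom (a + b).2⟩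
            = M ⟨a.1, hSdom a.2⟩ + M ⟨b.1, hSdom b.2⟩
        have h : (⟨((a + b : T) : X), hSdom (a + b).2⟩ : M.domain)
            = ⟨a.1, hSdom a.2⟩ + ⟨b.1, hSdom b.2⟩ := Subtype.ext rfl
        rw [h, M.map_add]
      map_smul' := by
        intro c a
        show M ⟨((c • a : T) : X), hSdom (c • a).2⟩ = c • M ⟨a.1, hSdom a.2⟩
        have h : (⟨((c • a : T) : X), hSdom (c • a).2⟩ : M.domain)
            = c • ⟨a.1, hSdom a.2⟩ := Subtype.ext rfl
        rw [h, M.map_smul] }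
  have hLinj : Function.Injective L := by
    rw [← LinearMap.ker_eq_bot, LinearMap.ker_eq_bot']
    intro m hm
    have := htriv m.1 m.2 (hSdom m.2) hm
    exact Subtype.ext this
  -- `L` is bounded below since `T` is finite dimensional and `L` injective
  let e : T ≃ₗ[ℂ] LinearMap.range L := LinearEquiv.ofInjective L hLinj
  let e' := e.toContinuousLinearEquiv
  obtain ⟨c, hc⟩ : ∃ c : ℝ, 0 ≤ c ∧ ∀ x : T, ‖x‖ ≤ c * ‖L x‖ := by
    refine ⟨‖(e'.symm : LinearMap.range L →L[ℂ] T)‖, ?_, fun x => ?_⟩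
    · exact norm_nonneg (e'.symm : LinearMap.range L →L[ℂ] T)
    have h1 : ‖x‖ = ‖e'.symm (e' x)‖ := by rw [e'.symm_apply_apply]
    have h2 : ‖e'.symm (e' x)‖ ≤ ‖(e'.symm : LinearMap.range L →L[ℂ] T)‖ * ‖e' x‖ :=
      (e'.symm : LinearMap.range L →L[ℂ] T).le_opNorm _
    have h3 : ‖e' x‖ = ‖L x‖ := by
      have : ((e' x : LinearMap.range L) : X) = L x := rfl
      rw [← this]; rfl
    rw [h1, ← h3]; exact h2
  obtain ⟨hc0, hc⟩ := hc
  obtain ⟨cf, hcf⟩ := hfbdd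
  refine ⟨c * (max cf 0 + 1 + ‖C‖), fun n => ?_⟩
  have hx : (v n) ∈ T := hvS n
  have hLx : L ⟨v n, hx⟩ = f n - (u n + C (u n)) := by
    have hval : L ⟨v n, hx⟩ = M ⟨v n, hSdom (hvS n)⟩ := rfl
    rw [hval, eq_sub_iff_add_eq, add_comm]
    exact heq n
  have h1 : ‖v n‖ ≤ c * ‖L ⟨v n, hx⟩‖ := hc ⟨v n, hx⟩
  rw [hLx] at h1
  have h2 : ‖f n - (u n + C (u n))‖ ≤ ‖f n‖ + (‖u n‖ + ‖C (u n)‖) :=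
    (norm_sub_le _ _).trans (by gcongr; exact norm_add_le _ _)
  have h3 : ‖C (u n)‖ ≤ ‖C‖ * ‖u n‖ := C.le_opNorm _
  have h4 : ‖f n‖ ≤ max cf 0 := le_max_of_le_left (hcf n)
  have h5 : (0:ℝ) ≤ ‖u n‖ := norm_nonneg _
  have h6 : (0:ℝ) ≤ ‖C‖ := norm_nonneg _
  have h7 : (0:ℝ) ≤ max cf 0 := le_max_right _ _
  have h8 : ‖f n - (u n + C (u n))‖ ≤ (max cf 0 + 1 + ‖C‖) * (1 + ‖u n‖) := by nlinarith
  have h9 : c * ‖f n - (u n + C (u n))‖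
      ≤ c * ((max cf 0 + 1 + ‖C‖) * (1 + ‖u n‖)) := mul_le_mul_of_nonneg_left h8 hc0
  rw [← mul_assoc] at h9
  linarith
end

section
/- Let H be a complex Hilbert space, F : H → H and G : dom(G) ⊆ H → H linear with dom(G) dense, and suppose there is a bilinear pairing ⟨·,·⟩ on H with ⟨w,w⟩ = 0 ⟹ w = 0, with respect to which F has adjoint F' and G has adjoint G'. Define 𝓕 = { f ∈ H : ∃ u ∈ range(I+F'), ∃ v ∈ G'[ker(I+F')] ∩ dom(G), (I+F)u + Gv = f }. If 𝓕 = H, then ker(I+F') ∩ ker(G') = {0}. -/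
/-- The 'only if' direction of the solubility theorem in a Hilbert space `H`:
if every `f ∈ H` is of the form `(I + F) u + G v` with `u ∈ range (I + F')` and
`v ∈ G'[ker (I + F')]`, then `ker (I + F') ∩ ker G' = {0}`. -/
theorem solvable_for_all_implies_trivial_kernel_intersection
    {H : Type*} [NormedAddCommGroup H] [InnerProductSpace ℂ H] [CompleteSpace H]
    (B : H →ₗ[ℂ] H →ₗ[ℂ] ℂ)
    (hBdef : ∀ w : H, B w w = 0 → w = 0)
    (F F' : H →L[ℂ] H)
    (hFadj : ∀ u v : H, B (F u) v = B u (F' v))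
    (G G' : H →ₗ.[ℂ] H)
    (hGdense : Dense (G.domain : Set H))
    (hGadj : ∀ (v : G.domain) (v' : G'.domain), B (G v) v' = B v (G' v'))
    -- `G'` is defined on `ker (I + F')`:
    (hker : ∀ x : H, x + F' x = 0 → x ∈ G'.domain)
    -- `𝓕 = H` : every `f` is solvable with the structured data
    (hall : ∀ f : H, ∃ u : H, (∃ u' : H, u = u' + F' u') ∧
      ∃ v : G.domain, (∃ w : G'.domain, ((w : H) + F' w = 0) ∧ (v : H) = G' w) ∧
        u + F u + G v = f) :
    ∀ x : H, ∀ hx : x ∈ G'.domain, x + F' x = 0 → G' ⟨x, hx⟩ = 0 → x = 0 := by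
  intro x hx hxker hGx
  obtain ⟨u, _, v, _, hsol⟩ := hall x
  apply hBdef
  have h1 : B (F u) x = B u (F' x) := hFadj u x
  have h2 : B (G v) x = B (v : H) (G' ⟨x, hx⟩) := hGadj v ⟨x, hx⟩
  have : B x x = B u x + B (F u) x + B (G v) x := by
    rw [← hsol]; simp
  rw [this, h1, h2, hGx, map_zero, ← map_add]
  have : x + F' x = 0 := hxker
  rw [this, map_zero]
  ring
end

section
/- Let X be a Banach space with pairing ⟨·,·⟩ satisfying ⟨w,w⟩ = 0 ⟹ w = 0, let C be compact on X with compact adjoint C', and M closed densely defined with adjoint M'. Then any solution (u, v) of (I + C)u + Mv = f with u ∈ range(I + C') and v ∈ M'[ker(I + C')] is unique in range(I + C') × M'[ker(I + C')]: if (u₁, v₁) and (u₂, v₂) are two such solutions, then u₁ = u₂ and v₁ = v₂. -/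
/-- Uniqueness assertion of Theorem 2: solutions of `(I + C) u + M v = f` with
`u ∈ range (I + C')` and `v ∈ M'[ker (I + C')]` are unique in
`range (I + C') × M'[ker (I + C')]`. -/
theorem indefinite_equation_uniqueness
    {X : Type*} [NormedAddCommGroup X] [NormedSpace ℂ X] [CompleteSpace X]
    (B : X →ₗ[ℂ] X →ₗ[ℂ] ℂ)
    (hBdef : ∀ w : X, B w w = 0 → w = 0)
    (C C' : X →L[ℂ] X) (hC : IsCompactOperator C) (hC' : IsCompactOperator C')
    (hCadj : ∀ u v : X, B (C u) v = B u (C' v))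
    (M M' : X →ₗ.[ℂ] X)
    (hMdense : Dense (M.domain : Set X)) (hMclosed : M.IsClosed)
    (hMadj : ∀ (v : M.domain) (v' : M'.domain), B (M v) v' = B v (M' v'))
    (f : X)
    (u₁ u₂ v₁ v₂ : X)
    (hu₁ : ∃ u' : X, u₁ = u' + C' u') (hu₂ : ∃ u' : X, u₂ = u' + C' u')
    (hv₁ : ∃ w : M'.domain, ((w : X) + C' w = 0) ∧ v₁ = M' w)
    (hv₂ : ∃ w : M'.domain, ((w : X) + C' w = 0) ∧ v₂ = M' w)
    (hv₁dom : v₁ ∈ M.domain) (hv₂dom : v₂ ∈ M.domain)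
    (heq₁ : u₁ + C u₁ + M ⟨v₁, hv₁dom⟩ = f)
    (heq₂ : u₂ + C u₂ + M ⟨v₂, hv₂dom⟩ = f) :
    u₁ = u₂ ∧ v₁ = v₂ := by
  obtain ⟨u₁', hu₁'⟩ := hu₁
  obtain ⟨u₂', hu₂'⟩ := hu₂
  obtain ⟨w₁, hw₁, hv₁'⟩ := hv₁
  obtain ⟨w₂, hw₂, hv₂'⟩ := hv₂
  set u : X := u₁ - u₂ with hu
  set v : X := v₁ - v₂ with hv
  have hvdom : v ∈ M.domain := sub_mem hv₁dom hv₂dom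
  -- the difference of the domain elements
  have hsub : (⟨v, hvdom⟩ : M.domain) = (⟨v₁, hv₁dom⟩ : M.domain) - ⟨v₂, hv₂dom⟩ := rfl
  have hMv : M ⟨v, hvdom⟩ = M ⟨v₁, hv₁dom⟩ - M ⟨v₂, hv₂dom⟩ := by
    rw [hsub, M.map_sub]
  -- homogeneous equation
  have heq : u + C u + M ⟨v, hvdom⟩ = 0 := by
    have := sub_eq_zero.2 (heq₁.trans heq₂.symm)
    rw [hMv, hu, map_sub]
    linear_combination (norm := abel) this
  set w : M'.domain := w₁ - w₂ with hwdef
  have hw : (w : X) + C' w = 0 := by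
    have : ((w : X) + C' w) = ((w₁ : X) + C' w₁) - ((w₂ : X) + C' w₂) := by
      simp [hwdef, map_sub]
      abel
    rw [this, hw₁, hw₂, sub_zero]
  have hvM' : v = M' w := by
    rw [hv, hv₁', hv₂', hwdef, M'.map_sub]
  -- Step 1 : B v v = 0
  have hBvv : B v v = 0 := by
    have h1 : B (M ⟨v, hvdom⟩) w = B v (M' w) := hMadj _ _
    have h2 : M ⟨v, hvdom⟩ = -(u + C u) := by
      have := heq
      linear_combination (norm := abel) this
    have h3 : B (u + C u) (w : X) = B u ((w : X) + C' w) := by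
      simp [map_add, hCadj]
    rw [← hvM'] at h1
    rw [h2] at h1
    rw [map_neg] at h1
    simp only [LinearMap.neg_apply] at h1
    rw [h3, hw] at h1
    simpa using h1.symm
  have hv0 : v = 0 := hBdef v hBvv
  -- Step 2 : u + C u = 0
  have hM0 : M ⟨v, hvdom⟩ = 0 := by
    have : (⟨v, hvdom⟩ : M.domain) = 0 := by ext; simp [hv0]
    rw [this, M.map_zero]
  have huCu : u + C u = 0 := by
    have := heq
    rw [hM0, add_zero] at this
    exact this
  have hBuu : B u u = 0 := by
    have hu' : u = (u₁' - u₂') + C' (u₁' - u₂') := by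
      rw [hu, hu₁', hu₂', map_sub]; abel
    have h1 : B u u = B (u + C u) (u₁' - u₂') := by
      rw [map_add]
      simp only [LinearMap.add_apply]
      rw [hCadj]
      rw [← map_add]
      rw [← hu']
    rw [h1, huCu, map_zero]
    rfl
  have hu0 : u = 0 := hBdef u hBuu
  constructor
  · exact sub_eq_zero.1 hu0
  · exact sub_eq_zero.1 hv0
end
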